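/- Assume p > 2 and r odd with l' = (r-1)/2, l = l'+1. Let β ∈ M_N(o_r), let J ⊆ K^{l'} be a subgroup containing K^l whose image in K^{l'}/K^l is an isotropic subspace for the form B_β, and define f : K^{l'} → ℂ^× by f(1 + π^{l'}x) = ψ(π^{-r}tr(β·(π^{l'}x − (1/2)π^{2l'}x²))). Then the restriction of f to J is a group homomorphism. -/

import Mathlib

open IsLocalRing

/-- The principal congruence subgroup `1 + J^i · M_N(R)` inside `GL_N(R)`,
for an ideal `J` of a commutative ring `R`. -/
def congrSubgroup (N : ℕ) (R : Type) [CommRing R] (J : Ideal R) (i : ℕ) :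
    Subgroup (GL (Fin N) R) where
  carrier := {u | ∀ a b, ((u : Matrix (Fin N) (Fin N) R) - 1) a b ∈ J ^ i}
  one_mem' := by intro a b; simp
  mul_mem' := by
    intro u v hu hv a b
    have h : ((↑(u * v) : Matrix (Fin N) (Fin N) R) - 1)
        = ((↑u : Matrix (Fin N) (Fin N) R) - 1) * ((↑v : Matrix (Fin N) (Fin N) R) - 1)
          + (((↑u : Matrix (Fin N) (Fin N) R) - 1) + ((↑v : Matrix (Fin N) (Fin N) R) - 1)) := by
      rw [Units.val_mul]; noncomm_ring
    rw [h, Matrix.add_apply, Matrix.add_apply]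
    refine Ideal.add_mem _ ?_ (Ideal.add_mem _ (hu a b) (hv a b))
    rw [Matrix.mul_apply]
    exact Ideal.sum_mem _ fun c _ => Ideal.mul_mem_left _ _ (hv c b)
  inv_mem' := by
    intro u hu a b
    have h : ((↑u⁻¹ : Matrix (Fin N) (Fin N) R) - 1)
        = -((↑u⁻¹ : Matrix (Fin N) (Fin N) R) * ((↑u : Matrix (Fin N) (Fin N) R) - 1)) := by
      have huu : (↑u⁻¹ : Matrix (Fin N) (Fin N) R) * (↑u : Matrix (Fin N) (Fin N) R) = 1 := by
        rw [← Units.val_mul, inv_mul_cancel, Units.val_one]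
      noncomm_ring [huu]
    rw [h, Matrix.neg_apply, Matrix.mul_apply]
    exact neg_mem (Ideal.sum_mem _ fun c _ => Ideal.mul_mem_left _ _ (hu c b))

/-- The function `f(1 + π^{l'}x) = ψ(π^{-r} tr(β(π^{l'}x - ½π^{2l'}x²)))` on `K^{l'}`,
written in terms of `u = 1 + π^{l'}x` as
`f(u) = ψ(π^{-r} tr(β((u-1) - ½(u-1)²)))`, computed by lifting the trace to `o` via a
section `sec`. Here `half` is the inverse of `2` in `𝔬_r`. -/
noncomputable def psiLog (o : Type) [CommRing o] [IsDomain o] [IsDiscreteValuationRing o]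
    (N r : ℕ) (ψ : FractionRing o → ℂˣ)
    (sec : (o ⧸ (IsLocalRing.maximalIdeal o) ^ r) → o) (π : o)
    (half : o ⧸ (IsLocalRing.maximalIdeal o) ^ r)
    (β : Matrix (Fin N) (Fin N) (o ⧸ (IsLocalRing.maximalIdeal o) ^ r))
    (u : GL (Fin N) (o ⧸ (IsLocalRing.maximalIdeal o) ^ r)) : ℂˣ :=
  ψ (algebraMap o (FractionRing o)
      (sec (Matrix.trace (β *
        (((u : Matrix (Fin N) (Fin N) _) - 1) -
          half • (((u : Matrix (Fin N) (Fin N) _) - 1) *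
            ((u : Matrix (Fin N) (Fin N) _) - 1)))))) /
    (algebraMap o (FractionRing o) π) ^ r)

lemma entry_mul_mem' {R : Type} [CommRing R] {N : ℕ} {I J : Ideal R}
    {A B : Matrix (Fin N) (Fin N) R}
    (hA : ∀ a b, A a b ∈ I) (hB : ∀ a b, B a b ∈ J) :
    ∀ a b, (A * B) a b ∈ I * J := by
  intro a b
  rw [Matrix.mul_apply]
  exact Ideal.sum_mem _ fun c _ => Ideal.mul_mem_mul (hA a c) (hB c b)

/-- Assume `p > 2` and `r` odd. If `J ⊆ K^{l'}` contains `K^l` and its image in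
`K^{l'}/K^l` is isotropic for `B_β`, then `f(1+π^{l'}x) = ψ(π^{-r}tr(β(π^{l'}x - ½π^{2l'}x²)))`
restricts to a group homomorphism on `J`. The isotropy of the image of `J` is expressed by
the vanishing of `tr(β((u-1)(v-1) - (v-1)(u-1)))` in `𝔬_r` (note `2l' + 1 = r`). -/
theorem psiLog_restriction_is_hom
    (o : Type) [CommRing o] [IsDomain o] [IsDiscreteValuationRing o]
    [Finite (ResidueField o)] (N r : ℕ) (hN : 2 ≤ N) (hr : 2 ≤ r)
    (π : o) (hπ : maximalIdeal o = Ideal.span {π})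
    (l l' : ℕ) (hodd : 2 * l' + 1 = r) (hl : l = l' + 1)
    (half : o ⧸ (maximalIdeal o) ^ r) (hhalf : 2 * half = 1)
    (ψ : FractionRing o → ℂˣ)
    (hψadd : ∀ a b : FractionRing o, ψ (a + b) = ψ a * ψ b)
    (hψo : ∀ a : o, ψ (algebraMap o (FractionRing o) a) = 1)
    (hψp : ∃ a : o, ψ (algebraMap o (FractionRing o) a / algebraMap o (FractionRing o) π) ≠ 1)
    (sec : (o ⧸ (maximalIdeal o) ^ r) → o)
    (hsec : ∀ a, Ideal.Quotient.mk ((maximalIdeal o) ^ r) (sec a) = a)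
    (β : Matrix (Fin N) (Fin N) (o ⧸ (maximalIdeal o) ^ r))
    (J : Subgroup (GL (Fin N) (o ⧸ (maximalIdeal o) ^ r)))
    (hJup : J ≤ congrSubgroup N _
      ((maximalIdeal o).map (Ideal.Quotient.mk ((maximalIdeal o) ^ r))) l')
    (hJdown : congrSubgroup N _
      ((maximalIdeal o).map (Ideal.Quotient.mk ((maximalIdeal o) ^ r))) l ≤ J)
    (hiso : ∀ u ∈ J, ∀ v ∈ J,
      Matrix.trace (β *
        (((u : Matrix (Fin N) (Fin N) (o ⧸ (maximalIdeal o) ^ r)) - 1) *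
            ((v : Matrix (Fin N) (Fin N) (o ⧸ (maximalIdeal o) ^ r)) - 1) -
          ((v : Matrix (Fin N) (Fin N) (o ⧸ (maximalIdeal o) ^ r)) - 1) *
            ((u : Matrix (Fin N) (Fin N) (o ⧸ (maximalIdeal o) ^ r)) - 1))) = 0) :
    ∀ u ∈ J, ∀ v ∈ J,
      psiLog o N r ψ sec π half β (u * v)
        = psiLog o N r ψ sec π half β u * psiLog o N r ψ sec π half β v := by
  intro u hu v hv
  set I : Ideal (o ⧸ (maximalIdeal o) ^ r) :=
      (maximalIdeal o).map (Ideal.Quotient.mk ((maximalIdeal o) ^ r)) with hIdef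
  have hl'1 : 1 ≤ l' := by omega
  have hIr : I ^ r = ⊥ := by
    rw [hIdef, ← Ideal.map_pow, Ideal.map_quotient_self]
  have hcube : ∀ A B C : Matrix (Fin N) (Fin N) (o ⧸ (maximalIdeal o) ^ r),
      (∀ a b, A a b ∈ I ^ l') → (∀ a b, B a b ∈ I ^ l') → (∀ a b, C a b ∈ I ^ l') →
      A * B * C = 0 := by
    intro A B C hA hB hC
    ext a b
    have h1 := entry_mul_mem' (entry_mul_mem' hA hB) hC a b
    rw [← pow_add, ← pow_add] at h1
    have h2 : I ^ (l' + l' + l') ≤ I ^ r := Ideal.pow_le_pow_right (by omega)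
    have h3 := h2 h1
    rw [hIr] at h3
    simpa using h3
  set x : Matrix (Fin N) (Fin N) (o ⧸ (maximalIdeal o) ^ r) :=
      (↑u : Matrix (Fin N) (Fin N) (o ⧸ (maximalIdeal o) ^ r)) - 1 with hxdef
  set y : Matrix (Fin N) (Fin N) (o ⧸ (maximalIdeal o) ^ r) :=
      (↑v : Matrix (Fin N) (Fin N) (o ⧸ (maximalIdeal o) ^ r)) - 1 with hydef
  have hxm : ∀ a b, x a b ∈ I ^ l' := hJup hu
  have hym : ∀ a b, y a b ∈ I ^ l' := hJup hv
  have hxym : ∀ a b, (x * y) a b ∈ I ^ l' := by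
    intro a b
    have h1 := entry_mul_mem' hxm hym a b
    rw [← pow_add] at h1
    exact Ideal.pow_le_pow_right (by omega) h1
  have hw : (↑(u * v) : Matrix (Fin N) (Fin N) (o ⧸ (maximalIdeal o) ^ r)) - 1
      = x * y + (x + y) := by
    rw [Units.val_mul, hxdef, hydef]; noncomm_ring
  have hz1 : x * y * (x * y) = 0 := by
    rw [← mul_assoc]; exact hcube (x * y) x y hxym hxm hym
  have hz2 : x * y * x = 0 := hcube x y x hxm hym hxm
  have hz3 : x * y * y = 0 := hcube x y y hxm hym hym
  have hz4 : x * (x * y) = 0 := by rw [← mul_assoc]; exact hcube x x y hxm hxm hym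
  have hz5 : y * (x * y) = 0 := by rw [← mul_assoc]; exact hcube y x y hym hxm hym
  have hw2 : (x * y + (x + y)) * (x * y + (x + y)) = x * x + y * y + (x * y + y * x) := by
    have e : (x * y + (x + y)) * (x * y + (x + y))
        = x * x + y * y + (x * y + y * x)
          + (x * y * (x * y) + (x * y * x + x * y * y) + (x * (x * y) + y * (x * y))) := by
      noncomm_ring
    rw [e, hz1, hz2, hz3, hz4, hz5]
    simp
  have hiso' : Matrix.trace (β * (x * y)) = Matrix.trace (β * (y * x)) := by
    have h := hiso u hu v hv
    rw [← hxdef, ← hydef, Matrix.mul_sub, Matrix.trace_sub, sub_eq_zero] at h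
    exact h
  have hT : Matrix.trace (β *
        ((((u * v : GL (Fin N) (o ⧸ (maximalIdeal o) ^ r)) :
            Matrix (Fin N) (Fin N) (o ⧸ (maximalIdeal o) ^ r)) - 1)
          - half • ((((u * v : GL (Fin N) (o ⧸ (maximalIdeal o) ^ r)) :
              Matrix (Fin N) (Fin N) (o ⧸ (maximalIdeal o) ^ r)) - 1)
            * (((u * v : GL (Fin N) (o ⧸ (maximalIdeal o) ^ r)) :
              Matrix (Fin N) (Fin N) (o ⧸ (maximalIdeal o) ^ r)) - 1))))
      = Matrix.trace (β * (x - half • (x * x)))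
        + Matrix.trace (β * (y - half • (y * y))) := by
    rw [hw, hw2]
    simp only [Matrix.mul_sub, Matrix.mul_add, Matrix.mul_smul, smul_add, smul_sub,
      Matrix.trace_add, Matrix.trace_sub, Matrix.trace_smul, smul_eq_mul]
    linear_combination half * hiso' - Matrix.trace (β * (x * y)) * hhalf
  set Tu : o ⧸ (maximalIdeal o) ^ r := Matrix.trace (β * (x - half • (x * x))) with hTu
  set Tv : o ⧸ (maximalIdeal o) ^ r := Matrix.trace (β * (y - half • (y * y))) with hTv
  have hmem : sec (Tu + Tv) - (sec Tu + sec Tv) ∈ (maximalIdeal o) ^ r := by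
    rw [← Ideal.Quotient.eq_zero_iff_mem, map_sub, map_add, hsec, hsec, hsec, sub_self]
  have hdvd : π ^ r ∣ sec (Tu + Tv) - (sec Tu + sec Tv) := by
    rw [← Ideal.mem_span_singleton, ← Ideal.span_singleton_pow, ← hπ]
    exact hmem
  obtain ⟨c, hc⟩ := hdvd
  have hπne : π ≠ 0 := by
    intro h
    apply IsDiscreteValuationRing.not_a_field o
    rw [hπ, h, Ideal.span_singleton_eq_bot]
  have hφπ : algebraMap o (FractionRing o) π ≠ 0 :=
    (map_ne_zero_iff _ (IsFractionRing.injective o (FractionRing o))).mpr hπne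
  have hd : (algebraMap o (FractionRing o) π) ^ r ≠ 0 := pow_ne_zero _ hφπ
  have hc' : algebraMap o (FractionRing o) (sec (Tu + Tv))
      = algebraMap o (FractionRing o) (sec Tu) + algebraMap o (FractionRing o) (sec Tv)
        + (algebraMap o (FractionRing o) π) ^ r * algebraMap o (FractionRing o) c := by
    have h : sec (Tu + Tv) = sec Tu + sec Tv + π ^ r * c := by linear_combination hc
    rw [h, map_add, map_add, map_mul, map_pow]
  have hsplit : algebraMap o (FractionRing o) (sec (Tu + Tv))
        / (algebraMap o (FractionRing o) π) ^ r
      = algebraMap o (FractionRing o) (sec Tu) / (algebraMap o (FractionRing o) π) ^ r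
        + algebraMap o (FractionRing o) (sec Tv) / (algebraMap o (FractionRing o) π) ^ r
        + algebraMap o (FractionRing o) c := by
    rw [hc', add_div, add_div, mul_div_cancel_left₀ _ hd]
  simp only [psiLog]
  rw [hT, hsplit, hψadd, hψadd, hψo, mul_one]
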